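/- Let k be an algebraically closed field of characteristic zero. A 2-dimensional linear subspace W ⊆ k^6 is contained in the zero locus of the three quadratic forms x_3² − 2x_2² + x_1² − 2x_0², x_4² − 2x_3² + x_2² − 2x_0², x_5² − 2x_4² + x_3² − 2x_0² if and only if there exists a sign vector ε = (ε_1,…,ε_5) ∈ {±1}^5 such that W is the span of the vectors (0, ε_1, ε_2, ε_3, ε_4, ε_5) and (1, 1·ε_1, 2·ε_2, 3·ε_3, 4·ε_4, 5·ε_5). In particular, the Büchi K3 surface X_5 contains exactly 32 lines, namely the lines with affine parametric equations x_0 = 1, x_i = ε_i(t+i) for i = 1,…,5. -/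

import Mathlib

/-- The first spanning vector `(0, ε₁, ε₂, ε₃, ε₄, ε₅)` of the line `L_ε`. -/
def buchiLineDir {k : Type*} [Field k] (ε : Fin 5 → k) : Fin 6 → k :=
  ![0, ε 0, ε 1, ε 2, ε 3, ε 4]

/-- The second spanning vector `(1, 1·ε₁, 2·ε₂, 3·ε₃, 4·ε₄, 5·ε₅)` of the
line `L_ε`. -/
def buchiLinePt {k : Type*} [Field k] (ε : Fin 5 → k) : Fin 6 → k :=
  ![1, 1 * ε 0, 2 * ε 1, 3 * ε 2, 4 * ε 3, 5 * ε 4]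

/-- Scalar helper: vanishing of a 2×2 minor, for the "line at infinity" case. -/
private lemma buchi_minor {k : Type*} [Field k] [CharZero k]
    (a1 a2 b1 b2 ai bi aj bj X Y : k)
    (hai : ai^2 = a1^2 + X*(a2^2 - a1^2)) (haj : aj^2 = a1^2 + Y*(a2^2 - a1^2))
    (hbi : bi^2 = b1^2 + X*(b2^2 - b1^2)) (hbj : bj^2 = b1^2 + Y*(b2^2 - b1^2))
    (hci : ai*bi = a1*b1 + X*(a2*b2 - a1*b1)) (hcj : aj*bj = a1*b1 + Y*(a2*b2 - a1*b1))
    (hg : (2*a2*b2 - a1*b1)^2 = (2*a2^2 - a1^2)*(2*b2^2 - b1^2)) :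
    ai * bj = aj * bi := by
  have h : (ai*bj - aj*bi)^2 = 0 := by
    linear_combination bj^2*hai + (a1^2+X*(a2^2-a1^2))*hbj + bi^2*haj + (a1^2+Y*(a2^2-a1^2))*hbi
      - 2*(aj*bj)*hci - 2*(a1*b1+X*(a2*b2-a1*b1))*hcj + ((X+Y)/2 - X*Y)*hg
  have h2 : ai*bj - aj*bi = 0 := sq_eq_zero_iff.mp h
  linear_combination h2

/-- Scalar helper: an element with `x² = n²` is `±1` times `n`. -/
private lemma buchi_sign {k : Type*} [Field k] (x n : k) [Decidable (x = n)]
    (h : x^2 = n^2) :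
    x = (if x = n then (1:k) else -1) * n := by
  by_cases hc : x = n
  · rw [if_pos hc, one_mul]; exact hc
  · have h2 : (x - n)*(x + n) = 0 := by linear_combination h
    rcases mul_eq_zero.mp h2 with h3 | h3
    · exact absurd (sub_eq_zero.mp h3) hc
    · rw [if_neg hc]
      linear_combination h3

private lemma buchi_ite_sign {k : Type*} [Field k] {P : Prop} [Decidable P] :
    (if P then (1:k) else -1) = 1 ∨ (if P then (1:k) else -1) = -1 := by
  split
  · exact Or.inl rfl
  · exact Or.inr rfl

set_option maxHeartbeats 2000000 in
/-- Over an algebraically closed field of characteristic zero, a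
`2`-dimensional linear subspace `W ⊆ k⁶` lies in the common zero locus of the
three Büchi quadrics
`x₃² − 2x₂² + x₁² − 2x₀²`, `x₄² − 2x₃² + x₂² − 2x₀²`, `x₅² − 2x₄² + x₃² − 2x₀²`
if and only if there is a sign vector `ε ∈ {±1}⁵` with
`W = span {(0,ε₁,…,ε₅), (1, 1ε₁, 2ε₂, 3ε₃, 4ε₄, 5ε₅)}`; i.e. the Büchi K3
surface `X₅` contains exactly the `32` lines `x_i = ε_i (t + i)`. -/
theorem buchi_K3_lines {k : Type*} [Field k] [IsAlgClosed k] [CharZero k]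
    (W : Submodule k (Fin 6 → k)) (hW : Module.finrank k W = 2) :
    (∀ v ∈ W,
        v 3 ^ 2 - 2 * v 2 ^ 2 + v 1 ^ 2 - 2 * v 0 ^ 2 = 0 ∧
        v 4 ^ 2 - 2 * v 3 ^ 2 + v 2 ^ 2 - 2 * v 0 ^ 2 = 0 ∧
        v 5 ^ 2 - 2 * v 4 ^ 2 + v 3 ^ 2 - 2 * v 0 ^ 2 = 0) ↔
      ∃ ε : Fin 5 → k, (∀ i, ε i = 1 ∨ ε i = -1) ∧
        W = Submodule.span k {buchiLineDir ε, buchiLinePt ε} := by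
  classical
  have hfd : FiniteDimensional k W := inferInstance
  constructor
  · intro H
    by_cases h0 : ∀ v ∈ W, v 0 = 0
    · -- Case B : the "line at infinity" case, impossible.
      exfalso
      obtain ⟨bb⟩ : Nonempty (Module.Basis (Fin 2) k W) := ⟨Module.finBasisOfFinrankEq k W hW⟩
      set u : Fin 6 → k := ((bb 0 : W) : Fin 6 → k) with hudef
      set w : Fin 6 → k := ((bb 1 : W) : Fin 6 → k) with hwdef
      have huW : u ∈ W := (bb 0).2
      have hwW : w ∈ W := (bb 1).2
      have hu0 : u 0 = 0 := h0 u huW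
      have hw0 : w 0 = 0 := h0 w hwW
      obtain ⟨e1, e2, e3⟩ := H u huW
      obtain ⟨f1, f2, f3⟩ := H w hwW
      obtain ⟨g1, g2, g3⟩ := H (u + w) (W.add_mem huW hwW)
      simp only [Pi.add_apply] at g1 g2 g3
      rw [hu0] at e1 e2 e3
      rw [hw0] at f1 f2 f3
      rw [hu0, hw0] at g1 g2 g3
      have c1 : u 3 * w 3 - 2*(u 2 * w 2) + u 1 * w 1 = 0 := by linear_combination (g1 - e1 - f1)/2
      have c2 : u 4 * w 4 - 2*(u 3 * w 3) + u 2 * w 2 = 0 := by linear_combination (g2 - e2 - f2)/2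
      have c3 : u 5 * w 5 - 2*(u 4 * w 4) + u 3 * w 3 = 0 := by linear_combination (g3 - e3 - f3)/2
      -- value forms
      have va1 : u 1^2 = u 1^2 + 0*(u 2^2 - u 1^2) := by ring
      have va2 : u 2^2 = u 1^2 + 1*(u 2^2 - u 1^2) := by ring
      have va3 : u 3^2 = u 1^2 + 2*(u 2^2 - u 1^2) := by linear_combination e1
      have va4 : u 4^2 = u 1^2 + 3*(u 2^2 - u 1^2) := by linear_combination e2 + 2*e1
      have va5 : u 5^2 = u 1^2 + 4*(u 2^2 - u 1^2) := by linear_combination e3 + 2*e2 + 3*e1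
      have vb1 : w 1^2 = w 1^2 + 0*(w 2^2 - w 1^2) := by ring
      have vb2 : w 2^2 = w 1^2 + 1*(w 2^2 - w 1^2) := by ring
      have vb3 : w 3^2 = w 1^2 + 2*(w 2^2 - w 1^2) := by linear_combination f1
      have vb4 : w 4^2 = w 1^2 + 3*(w 2^2 - w 1^2) := by linear_combination f2 + 2*f1
      have vb5 : w 5^2 = w 1^2 + 4*(w 2^2 - w 1^2) := by linear_combination f3 + 2*f2 + 3*f1
      have vc1 : u 1*w 1 = u 1*w 1 + 0*(u 2*w 2 - u 1*w 1) := by ring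
      have vc2 : u 2*w 2 = u 1*w 1 + 1*(u 2*w 2 - u 1*w 1) := by ring
      have vc3 : u 3*w 3 = u 1*w 1 + 2*(u 2*w 2 - u 1*w 1) := by linear_combination c1
      have vc4 : u 4*w 4 = u 1*w 1 + 3*(u 2*w 2 - u 1*w 1) := by linear_combination c2 + 2*c1
      have vc5 : u 5*w 5 = u 1*w 1 + 4*(u 2*w 2 - u 1*w 1) := by linear_combination c3 + 2*c2 + 3*c1
      have hg : (2*u 2*w 2 - u 1*w 1)^2 = (2*u 2^2 - u 1^2)*(2*w 2^2 - w 1^2) := by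
        linear_combination (-(u 3*w 3) - (2*u 2*w 2 - u 1*w 1))*vc3 + (2*w 2^2 - w 1^2)*va3
          + (u 3)^2*vb3
      -- all the 2×2 minors vanish, so u and w are proportional
      have mm : ∀ i j : Fin 6, i ≠ 0 → j ≠ 0 → u i * w j = u j * w i := by
        have m : ∀ (ai bi aj bj X Y : k),
            ai^2 = u 1^2 + X*(u 2^2 - u 1^2) → aj^2 = u 1^2 + Y*(u 2^2 - u 1^2) →
            bi^2 = w 1^2 + X*(w 2^2 - w 1^2) → bj^2 = w 1^2 + Y*(w 2^2 - w 1^2) →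
            ai*bi = u 1*w 1 + X*(u 2*w 2 - u 1*w 1) →
            aj*bj = u 1*w 1 + Y*(u 2*w 2 - u 1*w 1) → ai * bj = aj * bi := by
          intro ai bi aj bj X Y h1 h2 h3 h4 h5 h6
          exact buchi_minor (u 1) (u 2) (w 1) (w 2) ai bi aj bj X Y h1 h2 h3 h4 h5 h6 hg
        intro i j hi hj
        fin_cases i <;> fin_cases j <;>
          first
          | (exact absurd rfl hi)
          | (exact absurd rfl hj)
          | (exact m _ _ _ _ 0 0 va1 va1 vb1 vb1 vc1 vc1)
          | (exact m _ _ _ _ 0 1 va1 va2 vb1 vb2 vc1 vc2)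
          | (exact m _ _ _ _ 0 2 va1 va3 vb1 vb3 vc1 vc3)
          | (exact m _ _ _ _ 0 3 va1 va4 vb1 vb4 vc1 vc4)
          | (exact m _ _ _ _ 0 4 va1 va5 vb1 vb5 vc1 vc5)
          | (exact m _ _ _ _ 1 0 va2 va1 vb2 vb1 vc2 vc1)
          | (exact m _ _ _ _ 1 1 va2 va2 vb2 vb2 vc2 vc2)
          | (exact m _ _ _ _ 1 2 va2 va3 vb2 vb3 vc2 vc3)
          | (exact m _ _ _ _ 1 3 va2 va4 vb2 vb4 vc2 vc4)
          | (exact m _ _ _ _ 1 4 va2 va5 vb2 vb5 vc2 vc5)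
          | (exact m _ _ _ _ 2 0 va3 va1 vb3 vb1 vc3 vc1)
          | (exact m _ _ _ _ 2 1 va3 va2 vb3 vb2 vc3 vc2)
          | (exact m _ _ _ _ 2 2 va3 va3 vb3 vb3 vc3 vc3)
          | (exact m _ _ _ _ 2 3 va3 va4 vb3 vb4 vc3 vc4)
          | (exact m _ _ _ _ 2 4 va3 va5 vb3 vb5 vc3 vc5)
          | (exact m _ _ _ _ 3 0 va4 va1 vb4 vb1 vc4 vc1)
          | (exact m _ _ _ _ 3 1 va4 va2 vb4 vb2 vc4 vc2)
          | (exact m _ _ _ _ 3 2 va4 va3 vb4 vb3 vc4 vc3)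
          | (exact m _ _ _ _ 3 3 va4 va4 vb4 vb4 vc4 vc4)
          | (exact m _ _ _ _ 3 4 va4 va5 vb4 vb5 vc4 vc5)
          | (exact m _ _ _ _ 4 0 va5 va1 vb5 vb1 vc5 vc1)
          | (exact m _ _ _ _ 4 1 va5 va2 vb5 vb2 vc5 vc2)
          | (exact m _ _ _ _ 4 2 va5 va3 vb5 vb3 vc5 vc3)
          | (exact m _ _ _ _ 4 3 va5 va4 vb5 vb4 vc5 vc4)
          | (exact m _ _ _ _ 4 4 va5 va5 vb5 vb5 vc5 vc5)
      -- u ≠ 0, so some coordinate of u is nonzero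
      have hne : u 1 ≠ 0 ∨ u 2 ≠ 0 ∨ u 3 ≠ 0 ∨ u 4 ≠ 0 ∨ u 5 ≠ 0 := by
        by_contra hc
        push_neg at hc
        obtain ⟨h1, h2, h3, h4, h5⟩ := hc
        have hz : u = 0 := by
          funext i
          fin_cases i
          · exact hu0
          · exact h1
          · exact h2
          · exact h3
          · exact h4
          · exact h5
        exact bb.ne_zero 0 (Subtype.ext hz)
      have hprop : ∃ c : k, w = c • u := by
        obtain ht | ht | ht | ht | ht := hne
        · refine ⟨w 1 / u 1, ?_⟩
          funext i
          by_cases hi : i = 0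
          · subst hi
            show w 0 = w 1 / u 1 * u 0
            rw [hu0, hw0, mul_zero]
          · have hm := mm 1 i (by decide) hi
            show w i = w 1 / u 1 * u i
            rw [div_mul_eq_mul_div, eq_div_iff ht]
            linear_combination hm
        · refine ⟨w 2 / u 2, ?_⟩
          funext i
          by_cases hi : i = 0
          · subst hi
            show w 0 = w 2 / u 2 * u 0
            rw [hu0, hw0, mul_zero]
          · have hm := mm 2 i (by decide) hi
            show w i = w 2 / u 2 * u i
            rw [div_mul_eq_mul_div, eq_div_iff ht]
            linear_combination hm
        · refine ⟨w 3 / u 3, ?_⟩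
          funext i
          by_cases hi : i = 0
          · subst hi
            show w 0 = w 3 / u 3 * u 0
            rw [hu0, hw0, mul_zero]
          · have hm := mm 3 i (by decide) hi
            show w i = w 3 / u 3 * u i
            rw [div_mul_eq_mul_div, eq_div_iff ht]
            linear_combination hm
        · refine ⟨w 4 / u 4, ?_⟩
          funext i
          by_cases hi : i = 0
          · subst hi
            show w 0 = w 4 / u 4 * u 0
            rw [hu0, hw0, mul_zero]
          · have hm := mm 4 i (by decide) hi
            show w i = w 4 / u 4 * u i
            rw [div_mul_eq_mul_div, eq_div_iff ht]
            linear_combination hm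
        · refine ⟨w 5 / u 5, ?_⟩
          funext i
          by_cases hi : i = 0
          · subst hi
            show w 0 = w 5 / u 5 * u 0
            rw [hu0, hw0, mul_zero]
          · have hm := mm 5 i (by decide) hi
            show w i = w 5 / u 5 * u i
            rw [div_mul_eq_mul_div, eq_div_iff ht]
            linear_combination hm
      obtain ⟨c, hc⟩ := hprop
      have hbb : bb 1 = c • bb 0 := Subtype.ext hc
      have hind := bb.linearIndependent
      rw [Fintype.linearIndependent_iff] at hind
      have h1 := hind ![c, -1] (by
        rw [Fin.sum_univ_two]
        show c • bb 0 + (-1 : k) • bb 1 = 0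
        rw [hbb]
        module) 1
      have h2 : (-1 : k) = 0 := h1
      norm_num at h2
    · -- Case A : the main case.
      push_neg at h0
      obtain ⟨w', hw'W, hw'0⟩ := h0
      have hwW : (w' 0)⁻¹ • w' ∈ W := W.smul_mem _ hw'W
      set w : Fin 6 → k := (w' 0)⁻¹ • w' with hwdef
      have hw0 : w 0 = 1 := inv_mul_cancel₀ hw'0
      -- find a nonzero vector in W with vanishing first coordinate
      set φ : W →ₗ[k] k := (LinearMap.proj 0).comp W.subtype with hφ
      have hker : LinearMap.ker φ ≠ ⊥ := by
        intro hbot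
        have h1 := LinearMap.finrank_range_add_finrank_ker φ
        rw [hbot, hW] at h1
        have h2 : Module.finrank k (LinearMap.range φ) ≤ 1 := by
          simpa using Submodule.finrank_le (LinearMap.range φ)
        simp only [finrank_bot, add_zero] at h1
        omega
      obtain ⟨u', hu'ker, hu'ne⟩ := Submodule.exists_mem_ne_zero_of_ne_bot hker
      set u : Fin 6 → k := ((u' : W) : Fin 6 → k) with hudef
      have huW : u ∈ W := (u' : W).2
      have hu0 : u 0 = 0 := LinearMap.mem_ker.mp hu'ker
      have hune : u ≠ 0 := fun h => hu'ne (Subtype.ext h)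
      -- the scalar equations
      obtain ⟨e1, e2, e3⟩ := H u huW
      obtain ⟨f1, f2, f3⟩ := H w hwW
      obtain ⟨g1, g2, g3⟩ := H (u + w) (W.add_mem huW hwW)
      simp only [Pi.add_apply] at g1 g2 g3
      rw [hu0] at e1 e2 e3
      rw [hw0] at f1 f2 f3
      rw [hu0, hw0] at g1 g2 g3
      have c1 : u 3 * w 3 - 2*(u 2 * w 2) + u 1 * w 1 = 0 := by linear_combination (g1 - e1 - f1)/2
      have c2 : u 4 * w 4 - 2*(u 3 * w 3) + u 2 * w 2 = 0 := by linear_combination (g2 - e2 - f2)/2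
      have c3 : u 5 * w 5 - 2*(u 4 * w 4) + u 3 * w 3 = 0 := by linear_combination (g3 - e3 - f3)/2
      have va3 : u 3^2 = u 1^2 + 2*(u 2^2 - u 1^2) := by linear_combination e1
      have va4 : u 4^2 = u 1^2 + 3*(u 2^2 - u 1^2) := by linear_combination e2 + 2*e1
      have va5 : u 5^2 = u 1^2 + 4*(u 2^2 - u 1^2) := by linear_combination e3 + 2*e2 + 3*e1
      have vb3 : w 3^2 = w 1^2 + 2*(w 2^2 - w 1^2) + 2 := by linear_combination f1
      have vb4 : w 4^2 = w 1^2 + 3*(w 2^2 - w 1^2) + 6 := by linear_combination f2 + 2*f1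
      have vc3 : u 3*w 3 = u 1*w 1 + 2*(u 2*w 2 - u 1*w 1) := by linear_combination c1
      have vc4 : u 4*w 4 = u 1*w 1 + 3*(u 2*w 2 - u 1*w 1) := by linear_combination c2 + 2*c1
      have vc5 : u 5*w 5 = u 1*w 1 + 4*(u 2*w 2 - u 1*w 1) := by linear_combination c3 + 2*c2 + 3*c1
      have hg3 : (2*u 2*w 2 - u 1*w 1)^2 = (2*u 2^2 - u 1^2)*(2*w 2^2 - w 1^2 + 2) := by
        linear_combination (-(u 3*w 3) - (2*u 2*w 2 - u 1*w 1))*vc3 + (2*w 2^2 - w 1^2 + 2)*va3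
          + (u 3)^2*vb3
      have hg4 : (3*u 2*w 2 - 2*u 1*w 1)^2 = (3*u 2^2 - 2*u 1^2)*(3*w 2^2 - 2*w 1^2 + 6) := by
        linear_combination (-(u 4*w 4) - (3*u 2*w 2 - 2*u 1*w 1))*vc4 + (3*w 2^2 - 2*w 1^2 + 6)*va4
          + (u 4)^2*vb4
      have hq : u 2^2 = u 1^2 := by linear_combination (1/2)*hg3 - (1/6)*hg4
      set n : k := u 2*w 2 - u 1*w 1 with hndef
      have hn2 : n^2 = u 1^2 := by
        linear_combination (3/2)*hg3 - (1/3)*hg4 + (w 2^2 - w 1^2)*hq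
      -- squares of the coordinates of u
      have sa1 : u 1^2 = n^2 := hn2.symm
      have sa2 : u 2^2 = n^2 := by linear_combination hq + sa1
      have sa3 : u 3^2 = n^2 := by linear_combination va3 + 2*hq + sa1
      have sa4 : u 4^2 = n^2 := by linear_combination va4 + 3*hq + sa1
      have sa5 : u 5^2 = n^2 := by linear_combination va5 + 4*hq + sa1
      have hn0 : n ≠ 0 := by
        intro h
        apply hune
        funext i
        fin_cases i
        · exact hu0
        · have hz : u 1 ^ 2 = 0 := by rw [sa1, h]; ring
          exact sq_eq_zero_iff.mp hz
        · have hz : u 2 ^ 2 = 0 := by rw [sa2, h]; ring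
          exact sq_eq_zero_iff.mp hz
        · have hz : u 3 ^ 2 = 0 := by rw [sa3, h]; ring
          exact sq_eq_zero_iff.mp hz
        · have hz : u 4 ^ 2 = 0 := by rw [sa4, h]; ring
          exact sq_eq_zero_iff.mp hz
        · have hz : u 5 ^ 2 = 0 := by rw [sa5, h]; ring
          exact sq_eq_zero_iff.mp hz
      -- the sign vector
      set ε : Fin 5 → k :=
        ![if u 1 = n then 1 else -1, if u 2 = n then 1 else -1, if u 3 = n then 1 else -1,
          if u 4 = n then 1 else -1, if u 5 = n then 1 else -1] with hεdef
      have hsgn : ∀ i, ε i = 1 ∨ ε i = -1 := by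
        intro i
        fin_cases i
        · exact buchi_ite_sign
        · exact buchi_ite_sign
        · exact buchi_ite_sign
        · exact buchi_ite_sign
        · exact buchi_ite_sign
      have hε1 : u 1 = ε 0 * n := buchi_sign (u 1) n sa1
      have hε2 : u 2 = ε 1 * n := buchi_sign (u 2) n sa2
      have hε3 : u 3 = ε 2 * n := buchi_sign (u 3) n sa3
      have hε4 : u 4 = ε 3 * n := buchi_sign (u 4) n sa4
      have hε5 : u 5 = ε 4 * n := buchi_sign (u 5) n sa5
      have hs1 : ε 0^2 = 1 := by rcases hsgn 0 with h | h <;> rw [h] <;> ring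
      have hs2 : ε 1^2 = 1 := by rcases hsgn 1 with h | h <;> rw [h] <;> ring
      have hs3 : ε 2^2 = 1 := by rcases hsgn 2 with h | h <;> rw [h] <;> ring
      have hs4 : ε 3^2 = 1 := by rcases hsgn 3 with h | h <;> rw [h] <;> ring
      have hs5 : ε 4^2 = 1 := by rcases hsgn 4 with h | h <;> rw [h] <;> ring
      refine ⟨ε, hsgn, ?_⟩
      set d : Fin 6 → k := buchiLineDir ε with hddef
      set p : Fin 6 → k := buchiLinePt ε with hpdef
      set m : k := u 1 * w 1 with hmdef
      -- u = n • d
      have hund : u = n • d := by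
        funext i
        fin_cases i
        · show u 0 = n * 0
          rw [hu0, mul_zero]
        · show u 1 = n * ε 0
          rw [hε1]; ring
        · show u 2 = n * ε 1
          rw [hε2]; ring
        · show u 3 = n * ε 2
          rw [hε3]; ring
        · show u 4 = n * ε 3
          rw [hε4]; ring
        · show u 5 = n * ε 4
          rw [hε5]; ring
      -- n • w = (m - n) • d + n • p
      have hkey : n • w = (m - n) • d + n • p := by
        funext i
        fin_cases i
        · show n * w 0 = (m - n) * 0 + n * 1
          rw [hw0]; ring
        · show n * w 1 = (m - n) * ε 0 + n * (1 * ε 0)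
          have hm1 : u 1*w 1 = m + 0*n := by rw [hmdef]; ring
          linear_combination ε 0 * hm1 - (w 1 * ε 0) * hε1 - (n * w 1) * hs1
        · show n * w 2 = (m - n) * ε 1 + n * (2 * ε 1)
          have hm2 : u 2*w 2 = m + 1*n := by rw [hmdef, hndef]; ring
          linear_combination ε 1 * hm2 - (w 2 * ε 1) * hε2 - (n * w 2) * hs2
        · show n * w 3 = (m - n) * ε 2 + n * (3 * ε 2)
          linear_combination ε 2 * vc3 - (w 3 * ε 2) * hε3 - (n * w 3) * hs3
        · show n * w 4 = (m - n) * ε 3 + n * (4 * ε 3)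
          linear_combination ε 3 * vc4 - (w 4 * ε 3) * hε4 - (n * w 4) * hs4
        · show n * w 5 = (m - n) * ε 4 + n * (5 * ε 4)
          linear_combination ε 4 * vc5 - (w 5 * ε 4) * hε5 - (n * w 5) * hs5
      -- both spanning vectors lie in W
      have hdW : d ∈ W := by
        have hinv : n⁻¹ • u = d := by
          rw [hund, smul_smul, inv_mul_cancel₀ hn0, one_smul]
        rw [← hinv]
        exact W.smul_mem _ huW
      have hpW : p ∈ W := by
        have hp : p = n⁻¹ • (n • w - (m - n) • d) := by
          rw [hkey, add_sub_cancel_left, smul_smul, inv_mul_cancel₀ hn0, one_smul]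
        rw [hp]
        exact W.smul_mem _ (W.sub_mem (W.smul_mem _ hwW) (W.smul_mem _ hdW))
      have hsub : Submodule.span k {d, p} ≤ W := by
        rw [Submodule.span_le]
        intro x hx
        rcases hx with hx | hx
        · rw [hx]; exact hdW
        · rw [Set.mem_singleton_iff.mp hx]; exact hpW
      have hli : LinearIndependent k ![d, p] := by
        rw [LinearIndependent.pair_iff]
        intro s t hst
        have h0' : s * 0 + t * 1 = 0 := congrFun hst 0
        have h1' : s * ε 0 + t * (1 * ε 0) = 0 := congrFun hst 1
        have ht : t = 0 := by linear_combination h0'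
        have hε0 : ε 0 ≠ 0 := by
          rcases hsgn 0 with h | h <;> rw [h] <;> norm_num
        have hs : s = 0 := by
          rw [ht] at h1'
          have hse : s * ε 0 = 0 := by linear_combination h1'
          exact (mul_eq_zero.mp hse).resolve_right hε0
        exact ⟨hs, ht⟩
      have hrange : (Set.range ![d, p]) = {d, p} := by
        simp [Matrix.range_cons, Matrix.range_empty]
        exact Set.pair_comm p d
      have hcard : Module.finrank k (Submodule.span k ({d, p} : Set (Fin 6 → k))) = 2 := by
        rw [← hrange, finrank_span_eq_card hli]
        simp
      exact (Submodule.eq_of_le_of_finrank_le hsub (by rw [hW, hcard])).symm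
  · rintro ⟨ε, hsgn, rfl⟩
    have hsq : ∀ i, ε i ^ 2 = 1 := by
      intro i
      rcases hsgn i with h | h <;> rw [h] <;> ring
    intro v hv
    rw [Submodule.mem_span_pair] at hv
    obtain ⟨a, b, rfl⟩ := hv
    refine ⟨?_, ?_, ?_⟩
    · show (a * ε 2 + b * (3 * ε 2))^2 - 2 * (a * ε 1 + b * (2 * ε 1))^2
        + (a * ε 0 + b * (1 * ε 0))^2 - 2 * (a * 0 + b * 1)^2 = 0
      linear_combination (a + 3*b)^2 * hsq 2 - 2*(a + 2*b)^2 * hsq 1 + (a + b)^2 * hsq 0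
    · show (a * ε 3 + b * (4 * ε 3))^2 - 2 * (a * ε 2 + b * (3 * ε 2))^2
        + (a * ε 1 + b * (2 * ε 1))^2 - 2 * (a * 0 + b * 1)^2 = 0
      linear_combination (a + 4*b)^2 * hsq 3 - 2*(a + 3*b)^2 * hsq 2 + (a + 2*b)^2 * hsq 1
    · show (a * ε 4 + b * (5 * ε 4))^2 - 2 * (a * ε 3 + b * (4 * ε 3))^2
        + (a * ε 2 + b * (3 * ε 2))^2 - 2 * (a * 0 + b * 1)^2 = 0
      linear_combination (a + 5*b)^2 * hsq 4 - 2*(a + 4*b)^2 * hsq 3 + (a + 3*b)^2 * hsq 2
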